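/- A sequence of probability measures (Q_N) on C([0,1]), all concentrated on paths with x(0) = 0, is tight if and only if for every γ > 0, lim_{δ→0} sup_N Q_N( Γ̃(δ) > γ ) = 0, where Γ̃(δ) is the excursion-restricted modulus of continuity. -/

import Mathlib

open MeasureTheory Filter Set

/-- `s ∼ₓ t` : `x` does not vanish strictly between `s` and `t`. -/
def sameExcursion (x : C(unitInterval, ℝ)) (s t : unitInterval) : Prop :=
  ∀ u : unitInterval, min (s : ℝ) (t : ℝ) < (u : ℝ) → (u : ℝ) < max (s : ℝ) (t : ℝ) → x u ≠ 0

/-- The excursion-restricted continuity modulus at scale `δ`. -/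
noncomputable def excModulus (x : C(unitInterval, ℝ)) (δ : ℝ) : ℝ :=
  sSup {r : ℝ | ∃ s t : unitInterval,
    |(t : ℝ) - (s : ℝ)| ≤ δ ∧ sameExcursion x s t ∧ r = |x t - x s|}

set_option linter.unusedSectionVars false

variable [MeasurableSpace C(unitInterval, ℝ)] [BorelSpace C(unitInterval, ℝ)]

/-- A sequence of Borel measures on `C([0,1])` is tight. -/
def IsTightSeq (Q : ℕ → Measure C(unitInterval, ℝ)) : Prop :=
  ∀ ε : ℝ, 0 < ε → ∃ K : Set C(unitInterval, ℝ), IsCompact K ∧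
    ∀ N, Q N Kᶜ ≤ ENNReal.ofReal ε

section Aux

lemma excSet_bddAbove (x : C(unitInterval, ℝ)) (δ : ℝ) :
    BddAbove {r : ℝ | ∃ s t : unitInterval,
      |(t : ℝ) - (s : ℝ)| ≤ δ ∧ sameExcursion x s t ∧ r = |x t - x s|} := by
  refine ⟨2 * ‖x‖, ?_⟩
  rintro r ⟨s, t, -, -, rfl⟩
  calc |x t - x s| ≤ |x t| + |x s| := abs_sub _ _
    _ ≤ ‖x‖ + ‖x‖ := by
        gcongr <;> exact (ContinuousMap.norm_coe_le_norm x _)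
    _ = 2 * ‖x‖ := by ring

lemma zero_mem_excSet (x : C(unitInterval, ℝ)) {δ : ℝ} (hδ : 0 ≤ δ) :
    (0:ℝ) ∈ {r : ℝ | ∃ s t : unitInterval,
      |(t : ℝ) - (s : ℝ)| ≤ δ ∧ sameExcursion x s t ∧ r = |x t - x s|} := by
  refine ⟨0, 0, by simpa using hδ, ?_, by simp⟩
  intro u h1 h2
  simp only [min_self, max_self] at h1 h2
  exact absurd (h1.trans h2) (lt_irrefl _)

lemma excModulus_nonneg (x : C(unitInterval, ℝ)) {δ : ℝ} (hδ : 0 ≤ δ) :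
    0 ≤ excModulus x δ :=
  le_csSup (excSet_bddAbove x δ) (zero_mem_excSet x hδ)

lemma excModulus_le (x : C(unitInterval, ℝ)) {δ c : ℝ} (hc : 0 ≤ c)
    (h : ∀ s t : unitInterval, |(t:ℝ) - (s:ℝ)| ≤ δ → |x t - x s| ≤ c) :
    excModulus x δ ≤ c := by
  refine Real.sSup_le ?_ hc
  rintro r ⟨s, t, hst, -, rfl⟩
  exact h s t hst

lemma key_aux (x : C(unitInterval, ℝ)) {δ : ℝ} (hδ : 0 ≤ δ) (s t : unitInterval)
    (hle : (s:ℝ) ≤ t) (hst : (t:ℝ) - s ≤ δ) :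
    |x t - x s| ≤ 2 * excModulus x δ := by
  have hM := excModulus_nonneg x hδ
  set f : ℝ → ℝ := fun r => x (Set.projIcc 0 1 zero_le_one r) with hf
  have hfc : Continuous f := x.continuous.comp continuous_projIcc
  have hfx : ∀ u : unitInterval, f u = x u := by
    intro u
    rw [hf]
    simp only []
    congr 1
    exact Set.projIcc_val zero_le_one u
  by_cases hz : ∃ r : ℝ, (s:ℝ) ≤ r ∧ r ≤ (t:ℝ) ∧ f r = 0
  · set A := {r : ℝ | (s:ℝ) ≤ r ∧ r ≤ (t:ℝ) ∧ f r = 0} with hA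
    have hA_closed : IsClosed A := by
      have : A = Icc (s:ℝ) (t:ℝ) ∩ f ⁻¹' {0} := by
        ext r; simp [hA, Set.mem_Icc, and_assoc]
      rw [this]
      exact isClosed_Icc.inter (isClosed_singleton.preimage hfc)
    have hne : A.Nonempty := hz
    have hbddb : BddBelow A := ⟨s, fun r hr => hr.1⟩
    have hbdda : BddAbove A := ⟨t, fun r hr => hr.2.1⟩
    have hu₀ : sInf A ∈ A := hA_closed.csInf_mem hne hbddb
    have hv₀ : sSup A ∈ A := hA_closed.csSup_mem hne hbdda
    set u₀ := sInf A
    set v₀ := sSup A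
    have hu01 : u₀ ∈ unitInterval := ⟨le_trans s.2.1 hu₀.1, le_trans hu₀.2.1 t.2.2⟩
    have hv01 : v₀ ∈ unitInterval := ⟨le_trans s.2.1 hv₀.1, le_trans hv₀.2.1 t.2.2⟩
    set U : unitInterval := ⟨u₀, hu01⟩
    set V : unitInterval := ⟨v₀, hv01⟩
    have hxU : x U = 0 := by rw [← hfx U]; exact hu₀.2.2
    have hxV : x V = 0 := by rw [← hfx V]; exact hv₀.2.2
    have h1 : |x s| ≤ excModulus x δ := by
      have mem : |x U - x s| ∈ {r : ℝ | ∃ s t : unitInterval,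
          |(t : ℝ) - (s : ℝ)| ≤ δ ∧ sameExcursion x s t ∧ r = |x t - x s|} := by
        refine ⟨s, U, ?_, ?_, rfl⟩
        · rw [abs_of_nonneg (show (0:ℝ) ≤ (U:ℝ) - s from sub_nonneg.2 hu₀.1)]
          show u₀ - (s:ℝ) ≤ δ
          linarith [hu₀.2.1]
        · intro u h1 h2 hxu
          rw [show ((U:ℝ)) = u₀ from rfl] at h1 h2
          rw [min_eq_left hu₀.1] at h1
          rw [max_eq_right hu₀.1] at h2
          have : (u:ℝ) ∈ A := ⟨le_of_lt h1, le_trans (le_of_lt h2) hu₀.2.1,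
            by rw [hfx]; exact hxu⟩
          exact absurd (csInf_le hbddb this) (not_le.2 h2)
      calc |x s| = |x U - x s| := by rw [hxU, zero_sub, abs_neg]
        _ ≤ excModulus x δ := le_csSup (excSet_bddAbove x δ) mem
    have h2 : |x t| ≤ excModulus x δ := by
      have mem : |x t - x V| ∈ {r : ℝ | ∃ s t : unitInterval,
          |(t : ℝ) - (s : ℝ)| ≤ δ ∧ sameExcursion x s t ∧ r = |x t - x s|} := by
        refine ⟨V, t, ?_, ?_, rfl⟩
        · rw [abs_of_nonneg (show (0:ℝ) ≤ (t:ℝ) - V from sub_nonneg.2 hv₀.2.1)]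
          show (t:ℝ) - v₀ ≤ δ
          linarith [hv₀.1]
        · intro u h1 h2 hxu
          rw [show ((V:ℝ)) = v₀ from rfl] at h1 h2
          rw [min_eq_left hv₀.2.1] at h1
          rw [max_eq_right hv₀.2.1] at h2
          have : (u:ℝ) ∈ A := ⟨le_trans hv₀.1 (le_of_lt h1), le_of_lt h2,
            by rw [hfx]; exact hxu⟩
          exact absurd (le_csSup hbdda this) (not_le.2 h1)
      calc |x t| = |x t - x V| := by rw [hxV, sub_zero]
        _ ≤ excModulus x δ := le_csSup (excSet_bddAbove x δ) mem
    calc |x t - x s| ≤ |x t| + |x s| := abs_sub _ _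
      _ ≤ 2 * excModulus x δ := by linarith
  · have hsame : sameExcursion x s t := by
      intro u h1 h2 hxu
      rw [min_eq_left hle] at h1
      rw [max_eq_right hle] at h2
      exact hz ⟨u, le_of_lt h1, le_of_lt h2, by rw [hfx]; exact hxu⟩
    have mem : |x t - x s| ∈ {r : ℝ | ∃ s t : unitInterval,
        |(t : ℝ) - (s : ℝ)| ≤ δ ∧ sameExcursion x s t ∧ r = |x t - x s|} :=
      ⟨s, t, by rwa [abs_of_nonneg (sub_nonneg.2 hle)], hsame, rfl⟩
    have h3 : |x t - x s| ≤ excModulus x δ := le_csSup (excSet_bddAbove x δ) mem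
    linarith

lemma abs_sub_le_two_excModulus (x : C(unitInterval, ℝ)) {δ : ℝ} (hδ : 0 ≤ δ)
    (s t : unitInterval) (hst : |(t:ℝ) - (s:ℝ)| ≤ δ) :
    |x t - x s| ≤ 2 * excModulus x δ := by
  rcases le_total (s:ℝ) (t:ℝ) with h | h
  · exact key_aux x hδ s t h (by rwa [abs_of_nonneg (sub_nonneg.2 h)] at hst)
  · rw [abs_sub_comm]
    refine key_aux x hδ t s h ?_
    rwa [abs_sub_comm, abs_of_nonneg (sub_nonneg.2 h)] at hst

lemma compact_equicontinuous {K : Set C(unitInterval, ℝ)} (hK : IsCompact K) {γ : ℝ}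
    (hγ : 0 < γ) :
    ∃ d > 0, ∀ x ∈ K, ∀ s t : unitInterval, dist (s:ℝ) (t:ℝ) < d → |x t - x s| ≤ γ := by
  have h3 : 0 < γ/3 := by linarith
  obtain ⟨F, hFfin, hFcov⟩ := Metric.totallyBounded_iff.1 hK.totallyBounded (γ/3) h3
  have huc : ∀ y : C(unitInterval, ℝ), ∃ d > 0, ∀ s t : unitInterval,
      dist s t < d → dist (y s) (y t) < γ/3 := by
    intro y
    have h := Metric.uniformContinuous_iff.1
      (CompactSpace.uniformContinuous_of_continuous y.continuous) (γ/3) h3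
    obtain ⟨d, hd, hd2⟩ := h
    exact ⟨d, hd, fun s t hst => hd2 hst⟩
  choose d hd hd2 using huc
  set T : Finset ℝ := insert 1 (hFfin.toFinset.image d) with hT
  have hTne : T.Nonempty := ⟨1, Finset.mem_insert_self _ _⟩
  refine ⟨T.min' hTne, ?_, ?_⟩
  · rcases Finset.mem_insert.1 (T.min'_mem hTne) with h | h
    · rw [h]; norm_num
    · obtain ⟨y, _, hy2⟩ := Finset.mem_image.1 h
      rw [← hy2]; exact hd y
  · intro x hx s t hst
    obtain ⟨y, hy, hxy⟩ := mem_iUnion₂.1 (hFcov hx)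
    have hdy : T.min' hTne ≤ d y :=
      T.min'_le _ (Finset.mem_insert_of_mem (Finset.mem_image_of_mem d (hFfin.mem_toFinset.2 hy)))
    have hxy' : dist x y < γ/3 := Metric.mem_ball.1 hxy
    have h1 : dist (x s) (y s) ≤ dist x y := ContinuousMap.dist_apply_le_dist s
    have h2 : dist (x t) (y t) ≤ dist x y := ContinuousMap.dist_apply_le_dist t
    have h4 : dist (y s) (y t) < γ/3 := by
      refine hd2 y s t ?_
      rw [Subtype.dist_eq]
      exact lt_of_lt_of_le hst hdy
    have h5 : dist (x t) (x s) ≤ dist (x t) (y t) + dist (y t) (y s) + dist (y s) (x s) :=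
      dist_triangle4 _ _ _ _
    rw [dist_comm (y t) (y s)] at h5
    rw [dist_comm (y s) (x s)] at h5
    calc |x t - x s| = dist (x t) (x s) := (Real.dist_eq _ _).symm
      _ ≤ γ := by linarith

/-- The candidate compact set for the converse direction: paths vanishing at `0`
with prescribed moduli of continuity, is compact. -/
lemma isCompact_modulusSet (δ : ℕ → ℝ) (hδ : ∀ k, 0 < δ k) :
    IsCompact {x : C(unitInterval, ℝ) | x 0 = 0 ∧ ∀ k, ∀ s t : unitInterval,
      |(t:ℝ) - (s:ℝ)| ≤ δ k → |x t - x s| ≤ 2 * ((k:ℝ)+1)⁻¹} := by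
  set K : Set C(unitInterval, ℝ) := {x | x 0 = 0 ∧ ∀ k, ∀ s t : unitInterval,
      |(t:ℝ) - (s:ℝ)| ≤ δ k → |x t - x s| ≤ 2 * ((k:ℝ)+1)⁻¹} with hKdef
  set K' : Set (unitInterval → ℝ) := {g | g 0 = 0 ∧ ∀ k, ∀ s t : unitInterval,
      |(t:ℝ) - (s:ℝ)| ≤ δ k → |g t - g s| ≤ 2 * ((k:ℝ)+1)⁻¹} with hK'def
  -- a uniform pointwise bound on `K'`
  obtain ⟨n, hn⟩ := exists_nat_ge (1 / δ 0)
  have hn1 : 1 ≤ (n:ℝ) * δ 0 := by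
    rw [div_le_iff₀ (hδ 0)] at hn
    linarith
  have hbound : ∀ g ∈ K', ∀ t : unitInterval, |g t| ≤ 2 * n := by
    intro g hg
    have hg0 : ∀ s t : unitInterval, |(t:ℝ) - (s:ℝ)| ≤ δ 0 → |g t - g s| ≤ 2 := by
      intro s t h
      have := hg.2 0 s t h
      norm_num at this
      exact this
    have main : ∀ i : ℕ, ∀ t : unitInterval, (t:ℝ) ≤ i * δ 0 → |g t| ≤ 2 * i := by
      intro i
      induction i with
      | zero =>
        intro t ht
        have h0 : (t:ℝ) = 0 := le_antisymm (by simpa using ht) t.2.1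
        have : t = 0 := Subtype.ext h0
        rw [this, hg.1]
        simp
      | succ i ih =>
        intro t ht
        have hs1 : max ((t:ℝ) - δ 0) 0 ∈ unitInterval := by
          constructor
          · exact le_max_right _ _
          · apply max_le
            · linarith [t.2.2, (hδ 0).le]
            · norm_num
        set s : unitInterval := ⟨max ((t:ℝ) - δ 0) 0, hs1⟩ with hsdef
        have hsc : (s:ℝ) = max ((t:ℝ) - δ 0) 0 := rfl
        have hst : |(t:ℝ) - (s:ℝ)| ≤ δ 0 := by
          rw [hsc, abs_le]
          constructor
          · have : max ((t:ℝ) - δ 0) 0 ≤ t := max_le (by linarith [(hδ 0).le]) t.2.1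
            linarith [(hδ 0).le]
          · have : (t:ℝ) - δ 0 ≤ max ((t:ℝ) - δ 0) 0 := le_max_left _ _
            linarith
        have hsle : (s:ℝ) ≤ i * δ 0 := by
          rw [hsc]
          apply max_le
          · push_cast at ht ⊢
            linarith
          · exact mul_nonneg (Nat.cast_nonneg _) (hδ 0).le
        have h1 := hg0 s t hst
        have h2 := ih s hsle
        have := abs_sub_abs_le_abs_sub (g t) (g s)
        push_cast
        push_cast at h2
        linarith [abs_sub (g t) (g s), abs_add_le (g t - g s) (g s)]
    intro t
    refine main n t ?_
    linarith [t.2.2]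
  -- `K'` is closed in the product topology
  have hK'closed : IsClosed K' := by
    have : K' = {g : unitInterval → ℝ | g 0 = 0} ∩
        ⋂ (k : ℕ) (s : unitInterval) (t : unitInterval),
          {g : unitInterval → ℝ | |(t:ℝ) - (s:ℝ)| ≤ δ k → |g t - g s| ≤ 2 * ((k:ℝ)+1)⁻¹} := by
      ext g
      simp only [hK'def, Set.mem_inter_iff, Set.mem_iInter, Set.mem_setOf_eq]
    rw [this]
    refine IsClosed.inter ?_ ?_
    · exact isClosed_eq (continuous_apply 0) continuous_const
    · refine isClosed_iInter fun k => isClosed_iInter fun s => isClosed_iInter fun t => ?_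
      by_cases h : |(t:ℝ) - (s:ℝ)| ≤ δ k
      · simp only [h, forall_true_left]
        exact isClosed_le (continuous_abs.comp ((continuous_apply t).sub (continuous_apply s)))
          continuous_const
      · have : {g : unitInterval → ℝ | |(t:ℝ) - (s:ℝ)| ≤ δ k → |g t - g s| ≤ 2 * ((k:ℝ)+1)⁻¹}
            = univ := by
          ext g; simp [h]
        rw [this]; exact isClosed_univ
  -- `K'` is compact
  have hK'compact : IsCompact K' := by
    refine IsCompact.of_isClosed_subset (isCompact_univ_pi fun _ => isCompact_Icc
      (a := -(2 * (n:ℝ))) (b := 2 * (n:ℝ))) hK'closed ?_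
    intro g hg
    rw [Set.mem_univ_pi]
    intro t
    have := hbound g hg t
    rw [Set.mem_Icc]
    constructor <;> [linarith [neg_abs_le (g t)]; linarith [le_abs_self (g t)]]
  -- image identification
  have himg : ContinuousMap.toFun '' K = K' := by
    apply Set.Subset.antisymm
    · rintro _ ⟨x, hx, rfl⟩
      exact ⟨hx.1, hx.2⟩
    · intro g hg
      have hgc : Continuous g := by
        rw [Metric.continuous_iff]
        intro b ε hε
        obtain ⟨k, hk⟩ := exists_nat_gt (2 / ε)
        have hk' : 2 * ((k:ℝ)+1)⁻¹ < ε := by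
          rw [mul_inv_lt_iff₀ (by positivity)]
          rw [div_lt_iff₀ (by linarith : (0:ℝ) < ε)] at hk
          nlinarith
        refine ⟨δ k, hδ k, fun a hab => ?_⟩
        have : |(a:ℝ) - (b:ℝ)| ≤ δ k := by
          rw [Subtype.dist_eq, Real.dist_eq] at hab
          rw [abs_sub_comm] at hab
          rw [abs_sub_comm]
          exact hab.le
        have h2 := hg.2 k b a this
        rw [Real.dist_eq]
        exact lt_of_le_of_lt h2 hk'
      exact ⟨⟨g, hgc⟩, ⟨hg.1, hg.2⟩, rfl⟩
  -- equicontinuity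
  have hequi : Equicontinuous ((↑) : K → unitInterval → ℝ) := by
    apply UniformEquicontinuous.equicontinuous
    rw [Metric.uniformEquicontinuous_iff]
    intro ε hε
    obtain ⟨k, hk⟩ := exists_nat_gt (2 / ε)
    have hk' : 2 * ((k:ℝ)+1)⁻¹ < ε := by
      rw [mul_inv_lt_iff₀ (by positivity)]
      rw [div_lt_iff₀ (by linarith : (0:ℝ) < ε)] at hk
      nlinarith
    refine ⟨δ k, hδ k, fun a b hab x => ?_⟩
    have : |(a:ℝ) - (b:ℝ)| ≤ δ k := by
      rw [Subtype.dist_eq, Real.dist_eq] at hab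
      exact hab.le
    have h3 := x.2.2 k b a this
    rw [Real.dist_eq]
    exact lt_of_le_of_lt h3 hk'
  exact ArzelaAscoli.isCompact_of_equicontinuous K (himg ▸ hK'compact) hequi

end Aux

theorem tight_iff_excModulus (Q : ℕ → Measure C(unitInterval, ℝ))
    (hprob : ∀ N, IsProbabilityMeasure (Q N))
    (hzero : ∀ N, Q N {x | x 0 = 0} = 1) :
    IsTightSeq Q ↔ ∀ γ : ℝ, 0 < γ →
      Tendsto (fun δ : ℝ => ⨆ N, (Q N {x | γ < excModulus x δ}).toReal)
        (nhdsWithin 0 (Set.Ioi 0)) (nhds 0) := by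
  constructor
  · -- tightness implies the modulus condition
    intro htight γ hγ
    rw [Metric.tendsto_nhdsWithin_nhds]
    intro ε hε
    obtain ⟨K, hK, hKQ⟩ := htight (ε/2) (by linarith)
    obtain ⟨dd, hdd, hdd2⟩ := compact_equicontinuous hK hγ
    refine ⟨dd, hdd, ?_⟩
    intro δ hδIoi hδd
    have hδ0 : (0:ℝ) < δ := hδIoi
    have hδd' : δ < dd := by
      rw [Real.dist_eq, sub_zero, abs_of_pos hδ0] at hδd; exact hδd
    have hsub : {x : C(unitInterval, ℝ) | γ < excModulus x δ} ⊆ Kᶜ := by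
      intro x hx hxK
      have hmod : excModulus x δ ≤ γ := by
        refine excModulus_le x hγ.le ?_
        intro s t hst
        refine hdd2 x hxK s t ?_
        rw [Real.dist_eq, abs_sub_comm]
        exact lt_of_le_of_lt hst hδd'
      exact absurd hx (not_lt.2 hmod)
    have hterm : ∀ N, (Q N {x : C(unitInterval, ℝ) | γ < excModulus x δ}).toReal ≤ ε/2 := by
      intro N
      have h1 : Q N {x : C(unitInterval, ℝ) | γ < excModulus x δ} ≤ ENNReal.ofReal (ε/2) :=
        (measure_mono hsub).trans (hKQ N)
      calc (Q N {x : C(unitInterval, ℝ) | γ < excModulus x δ}).toReal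
          ≤ (ENNReal.ofReal (ε/2)).toReal := ENNReal.toReal_mono ENNReal.ofReal_ne_top h1
        _ = ε/2 := ENNReal.toReal_ofReal (by linarith)
    rw [Real.dist_eq, sub_zero,
      abs_of_nonneg (Real.iSup_nonneg fun N => ENNReal.toReal_nonneg)]
    exact lt_of_le_of_lt (ciSup_le hterm) (by linarith)
  · -- the modulus condition implies tightness
    intro H ε hε
    have hchoice : ∀ k : ℕ, ∃ d > 0, ∀ N,
        Q N {x | ((k:ℝ)+1)⁻¹ < excModulus x d} ≤ ENNReal.ofReal (ε * (1/2)^(k+2)) := by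
      intro k
      have hγ : (0:ℝ) < ((k:ℝ)+1)⁻¹ := by positivity
      have H' := H _ hγ
      rw [Metric.tendsto_nhdsWithin_nhds] at H'
      obtain ⟨d', hd', hprop⟩ := H' (ε * (1/2)^(k+2)) (by positivity)
      refine ⟨d'/2, half_pos hd', fun N => ?_⟩
      have hmem : d'/2 ∈ Ioi (0:ℝ) := half_pos hd'
      have hdist : dist (d'/2) 0 < d' := by
        rw [Real.dist_eq, sub_zero, abs_of_pos (half_pos hd')]; linarith
      have hlt := hprop hmem hdist
      rw [Real.dist_eq, sub_zero] at hlt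
      have hle : (Q N {x | ((k:ℝ)+1)⁻¹ < excModulus x (d'/2)}).toReal
          ≤ ⨆ M, (Q M {x | ((k:ℝ)+1)⁻¹ < excModulus x (d'/2)}).toReal := by
        apply le_ciSup (f := fun M => (Q M {x | ((k:ℝ)+1)⁻¹ < excModulus x (d'/2)}).toReal)
        refine ⟨1, ?_⟩
        rintro _ ⟨M, rfl⟩
        haveI := hprob M
        exact ENNReal.toReal_mono ENNReal.one_ne_top prob_le_one
      have habs : (Q N {x | ((k:ℝ)+1)⁻¹ < excModulus x (d'/2)}).toReal < ε * (1/2)^(k+2) :=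
        lt_of_le_of_lt (hle.trans (le_abs_self _)) hlt
      haveI := hprob N
      exact ((ENNReal.lt_ofReal_iff_toReal_lt (measure_ne_top _ _)).2 habs).le
    choose d hd hd2 using hchoice
    refine ⟨_, isCompact_modulusSet d hd, ?_⟩
    intro N
    haveI := hprob N
    have hsub : {x : C(unitInterval, ℝ) | x 0 = 0 ∧ ∀ k, ∀ s t : unitInterval,
        |(t:ℝ) - (s:ℝ)| ≤ d k → |x t - x s| ≤ 2 * ((k:ℝ)+1)⁻¹}ᶜ ⊆
        {x : C(unitInterval, ℝ) | x 0 ≠ 0} ∪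
        ⋃ k : ℕ, {x : C(unitInterval, ℝ) | ((k:ℝ)+1)⁻¹ < excModulus x (d k)} := by
      intro x hx
      by_cases h0 : x 0 = 0
      · right
        rw [mem_iUnion]
        simp only [mem_compl_iff, mem_setOf_eq] at hx
        push_neg at hx
        obtain ⟨k, s, t, hst, hgt⟩ := hx h0
        refine ⟨k, ?_⟩
        have h2 := abs_sub_le_two_excModulus x (hd k).le s t hst
        simp only [mem_setOf_eq]
        linarith
      · left; exact h0
    have hzero' : Q N {x : C(unitInterval, ℝ) | x 0 ≠ 0} = 0 := by
      have hm : MeasurableSet {x : C(unitInterval, ℝ) | x 0 = 0} := by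
        have hcl : IsClosed {x : C(unitInterval, ℝ) | x 0 = 0} :=
          isClosed_singleton.preimage (continuous_eval_const 0)
        exact hcl.measurableSet
      have heq : {x : C(unitInterval, ℝ) | x 0 ≠ 0} = {x : C(unitInterval, ℝ) | x 0 = 0}ᶜ := rfl
      rw [heq, measure_compl hm (measure_ne_top _ _), measure_univ, hzero N, tsub_self]
    have hsummable : Summable (fun k : ℕ => ε * (1/2:ℝ)^(k+2)) := by
      apply Summable.mul_left
      have h := (summable_geometric_of_lt_one (by norm_num : (0:ℝ) ≤ 1/2)
        (by norm_num : (1/2:ℝ) < 1)).mul_right ((1/2:ℝ)^2)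
      refine h.congr fun k => ?_
      rw [pow_add]
    have hts : ∑' k:ℕ, ε * (1/2:ℝ)^(k+2) = ε / 2 := by
      have h1 : ∀ k:ℕ, ε * (1/2:ℝ)^(k+2) = (ε/4) * (1/2)^k := by
        intro k; rw [pow_add]; ring
      rw [tsum_congr h1, tsum_mul_left,
        tsum_geometric_of_lt_one (by norm_num : (0:ℝ) ≤ 1/2) (by norm_num : (1/2:ℝ) < 1),
        show ((1:ℝ) - 1/2)⁻¹ = 2 by norm_num]
      ring
    calc Q N {x : C(unitInterval, ℝ) | x 0 = 0 ∧ ∀ k, ∀ s t : unitInterval,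
          |(t:ℝ) - (s:ℝ)| ≤ d k → |x t - x s| ≤ 2 * ((k:ℝ)+1)⁻¹}ᶜ
        ≤ Q N ({x : C(unitInterval, ℝ) | x 0 ≠ 0} ∪
          ⋃ k : ℕ, {x : C(unitInterval, ℝ) | ((k:ℝ)+1)⁻¹ < excModulus x (d k)}) :=
          measure_mono hsub
      _ ≤ Q N {x : C(unitInterval, ℝ) | x 0 ≠ 0} +
          Q N (⋃ k : ℕ, {x : C(unitInterval, ℝ) | ((k:ℝ)+1)⁻¹ < excModulus x (d k)}) :=
          measure_union_le _ _
      _ ≤ 0 + ∑' k : ℕ, Q N {x : C(unitInterval, ℝ) | ((k:ℝ)+1)⁻¹ < excModulus x (d k)} := by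
          rw [hzero']
          exact add_le_add le_rfl (measure_iUnion_le _)
      _ ≤ ∑' k, ENNReal.ofReal (ε * (1/2)^(k+2)) := by
          rw [zero_add]
          exact ENNReal.tsum_le_tsum (fun k => hd2 k N)
      _ = ENNReal.ofReal (∑' k:ℕ, ε * (1/2:ℝ)^(k+2)) :=
          (ENNReal.ofReal_tsum_of_nonneg (fun k => by positivity) hsummable).symm
      _ ≤ ENNReal.ofReal ε := by
          rw [hts]
          exact ENNReal.ofReal_le_ofReal (by linarith)
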